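/- Let 𝔻 = (D, w) be an n-dimensional special datum, let R_𝔻 ⊆ ℂ[x₁,…,xₙ] be the ℂ-subalgebra generated by the monomials x_J^{w(J)} for J ∈ D (where x_J = ∏_{j∈J} x_j), and let 𝔪_𝔻 ⊆ R_𝔻 be the maximal ideal generated by these monomials. Then the dimension of 𝔪_𝔻/𝔪_𝔻² as a vector space over ℂ (equivalently, the embedding dimension of the local ring (R_𝔻)_{𝔪_𝔻}) is equal to |D| = n + #{J ∈ D : |J| ≥ 2}. -/

import Mathlib

open Finset

/-- `J' ⋖ J` in `D`: `J' ⊊ J` and there is no `K ∈ D` with `J' ⊊ K ⊊ J`. -/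
def CoversIn {n : ℕ} (D : Finset (Finset (Fin n))) (J' J : Finset (Fin n)) : Prop :=
  J' ⊂ J ∧ ¬ ∃ K ∈ D, J' ⊂ K ∧ K ⊂ J

/-- An `n`-dimensional special datum (Watanabe): a laminar family `D` of non-empty
subsets of `{1,…,n}` containing all singletons, with weights `w : D → ℕ₊` that are `1`
on maximal elements, strictly increase and divide along reverse inclusion, and agree on
elements covered by a common element. -/
structure IsSpecialDatum {n : ℕ} (D : Finset (Finset (Fin n))) (w : Finset (Fin n) → ℕ) : Prop where
  nonempty_mem : ∀ J ∈ D, J.Nonempty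
  singleton_mem : ∀ i : Fin n, {i} ∈ D
  laminar : ∀ J ∈ D, ∀ J' ∈ D, J ⊆ J' ∨ J' ⊆ J ∨ J ∩ J' = ∅
  w_pos : ∀ J ∈ D, 0 < w J
  w_max : ∀ J ∈ D, (∀ K ∈ D, J ⊆ K → J = K) → w J = 1
  w_lt : ∀ J ∈ D, ∀ J' ∈ D, J ⊂ J' → w J' < w J
  w_dvd : ∀ J ∈ D, ∀ J' ∈ D, J ⊂ J' → w J' ∣ w J
  w_cover : ∀ J₁ ∈ D, ∀ J₂ ∈ D, ∀ J ∈ D, CoversIn D J₁ J → CoversIn D J₂ J → w J₁ = w J₂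

open MvPolynomial

set_option synthInstance.maxHeartbeats 1000000
set_option maxHeartbeats 1000000

/-- The ring `R_𝔻` of a datum `(D, w)`: the `ℂ`-subalgebra of `ℂ[x₁,…,xₙ]` generated
by the monomials `x_K^{w(K)} = (∏_{j∈K} x_j)^{w(K)}` for `K ∈ D`. -/
noncomputable def datumRing (n : ℕ) (D : Finset (Finset (Fin n)))
    (w : Finset (Fin n) → ℕ) : Subalgebra ℂ (MvPolynomial (Fin n) ℂ) :=
  Algebra.adjoin ℂ { p : MvPolynomial (Fin n) ℂ | ∃ K ∈ D, p = (∏ j ∈ K, X j) ^ (w K) }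

/-- The maximal ideal `𝔪_𝔻 ⊆ R_𝔻` generated by the monomials `x_K^{w(K)}`, `K ∈ D`. -/
noncomputable def datumIdeal (n : ℕ) (D : Finset (Finset (Fin n)))
    (w : Finset (Fin n) → ℕ) : Ideal (datumRing n D w) :=
  Ideal.span { f : datumRing n D w |
    ∃ K ∈ D, (f : MvPolynomial (Fin n) ℂ) = (∏ j ∈ K, X j) ^ (w K) }


set_option synthInstance.maxHeartbeats 8000000
set_option maxHeartbeats 8000000


noncomputable def vvec {n : ℕ} (w : Finset (Fin n) → ℕ) (J : Finset (Fin n)) : Fin n →₀ ℕ :=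
  ∑ j ∈ J, Finsupp.single j (w J)

lemma vvec_apply {n : ℕ} (w : Finset (Fin n) → ℕ) (J : Finset (Fin n)) (i : Fin n) :
    vvec w J i = if i ∈ J then w J else 0 := by
  classical
  rw [vvec, Finsupp.finset_sum_apply]
  simp [Finsupp.single_apply]

lemma vvec_support {n : ℕ} (w : Finset (Fin n) → ℕ) (J : Finset (Fin n)) (hw : 0 < w J) :
    (vvec w J).support = J := by
  ext i
  simp only [Finsupp.mem_support_iff, vvec_apply]
  split <;> simp_all <;> omega

lemma vvec_ne_zero {n : ℕ} (w : Finset (Fin n) → ℕ) (J : Finset (Fin n)) (hJ : J.Nonempty)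
    (hw : 0 < w J) : vvec w J ≠ 0 := by
  intro h
  obtain ⟨i, hi⟩ := hJ
  have := vvec_apply w J i
  rw [h] at this
  simp [hi] at this
  omega

lemma gen_eq_monomial {n : ℕ} (w : Finset (Fin n) → ℕ) (J : Finset (Fin n)) (hw : 0 < w J) :
    ((∏ j ∈ J, X j : MvPolynomial (Fin n) ℂ)) ^ (w J) = monomial (vvec w J) 1 := by
  rw [← prod_X_pow_eq_monomial, vvec_support w J hw, ← Finset.prod_pow]
  refine Finset.prod_congr rfl fun i hi => ?_
  rw [vvec_apply, if_pos hi]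


lemma key_no_decomp {n : ℕ} {D : Finset (Finset (Fin n))} {w : Finset (Fin n) → ℕ}
    (hD : IsSpecialDatum D w) {J K : Finset (Fin n)} (hJ : J ∈ D) (hK : K ∈ D)
    {u : Fin n →₀ ℕ} (hu : u ≠ 0) (h : vvec w K + u = vvec w J) : False := by
  have happ : ∀ i, vvec w K i + u i = vvec w J i := fun i => by
    rw [← h]; simp
  have hKJ : K ⊆ J := by
    intro i hi
    have h1 := happ i
    rw [vvec_apply, vvec_apply, if_pos hi] at h1
    have := hD.w_pos K hK
    by_contra hiJ
    rw [if_neg hiJ] at h1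
    omega
  rcases eq_or_ne K J with rfl | hne
  · exact hu (by simpa using h)
  · have hlt : w J < w K := hD.w_lt K hK J hJ ⟨hKJ, fun hsub => hne (Finset.Subset.antisymm hKJ hsub)⟩
    obtain ⟨i, hi⟩ := hD.nonempty_mem K hK
    have h1 := happ i
    rw [vvec_apply, vvec_apply, if_pos hi, if_pos (hKJ hi)] at h1
    omega


lemma constCoeff_mem_ideal {n : ℕ} {D : Finset (Finset (Fin n))} {w : Finset (Fin n) → ℕ}
    (hD : IsSpecialDatum D w) {a : datumRing n D w} (ha : a ∈ datumIdeal n D w) :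
    constantCoeff ((a : MvPolynomial (Fin n) ℂ)) = 0 := by
  refine Submodule.span_induction ?_ ?_ ?_ ?_ ha
  · rintro f ⟨K, hK, hf⟩
    rw [hf, gen_eq_monomial w K (hD.w_pos K hK), constantCoeff_monomial,
      if_neg (vvec_ne_zero w K (hD.nonempty_mem K hK) (hD.w_pos K hK))]
  · simp
  · intro x y _ _ hx hy
    push_cast
    rw [map_add, hx, hy, add_zero]
  · intro r x _ hx
    rw [smul_eq_mul]
    push_cast
    rw [map_mul, hx, mul_zero]

lemma coeff_mul_vanish {n : ℕ} {D : Finset (Finset (Fin n))} {w : Finset (Fin n) → ℕ}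
    (hD : IsSpecialDatum D w) {J : Finset (Fin n)} (hJ : J ∈ D)
    {a : datumRing n D w} (ha : a ∈ datumIdeal n D w) :
    ∀ q : MvPolynomial (Fin n) ℂ, constantCoeff q = 0 →
      coeff (vvec w J) ((a : MvPolynomial (Fin n) ℂ) * q) = 0 := by
  refine Submodule.span_induction ?_ ?_ ?_ ?_ ha
  · rintro f ⟨K, hK, hf⟩ q hq
    rw [hf, gen_eq_monomial w K (hD.w_pos K hK), coeff_monomial_mul']
    split_ifs with hle
    · rcases eq_or_ne (vvec w J - vvec w K) 0 with h0 | h0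
      · have : vvec w J = vvec w K := by
          have := tsub_eq_zero_iff_le.mp h0
          exact le_antisymm this hle
        rw [h0]
        simpa [constantCoeff_eq] using hq
      · exact absurd (add_tsub_cancel_of_le hle) (fun h => (key_no_decomp hD hJ hK h0 h).elim)
    · rfl
  · intro q hq; simp
  · intro x y _ _ hx hy q hq
    push_cast
    rw [add_mul, coeff_add, hx q hq, hy q hq, add_zero]
  · intro r x _ hx q hq
    rw [smul_eq_mul]
    push_cast
    have : (r : MvPolynomial (Fin n) ℂ) * x * q = x * ((r : MvPolynomial (Fin n) ℂ) * q) := by ring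
    rw [this]
    exact hx _ (by rw [map_mul, hq, mul_zero])

lemma coeff_sq_vanish {n : ℕ} {D : Finset (Finset (Fin n))} {w : Finset (Fin n) → ℕ}
    (hD : IsSpecialDatum D w) {J : Finset (Fin n)} (hJ : J ∈ D)
    {f : datumRing n D w} (hf : f ∈ (datumIdeal n D w) ^ 2) :
    coeff (vvec w J) ((f : MvPolynomial (Fin n) ℂ)) = 0 := by
  rw [pow_two] at hf
  refine Submodule.mul_induction_on hf ?_ ?_
  · intro a ha b hb
    push_cast
    exact coeff_mul_vanish hD hJ ha _ (constCoeff_mem_ideal hD hb)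
  · intro x y hx hy
    push_cast
    rw [coeff_add, hx, hy, add_zero]

lemma sub_constCoeff_mem {n : ℕ} {D : Finset (Finset (Fin n))} {w : Finset (Fin n) → ℕ}
    (hD : IsSpecialDatum D w) (r : datumRing n D w) :
    r - algebraMap ℂ _ (constantCoeff (r : MvPolynomial (Fin n) ℂ)) ∈ datumIdeal n D w := by
  have h2 := r.2
  have hmain : ∀ (x : MvPolynomial (Fin n) ℂ) (hx : x ∈ datumRing n D w),
      (⟨x, hx⟩ : datumRing n D w) - algebraMap ℂ _ (constantCoeff x) ∈ datumIdeal n D w := by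
    intro x hx
    refine Algebra.adjoin_induction ?_ ?_ ?_ ?_ hx
    · rintro p ⟨K, hK, rfl⟩
      have hc : constantCoeff (((∏ j ∈ K, X j : MvPolynomial (Fin n) ℂ)) ^ (w K)) = 0 := by
        rw [gen_eq_monomial w K (hD.w_pos K hK), constantCoeff_monomial,
          if_neg (vvec_ne_zero w K (hD.nonempty_mem K hK) (hD.w_pos K hK))]
      rw [hc, map_zero, sub_zero]
      exact Ideal.subset_span ⟨K, hK, rfl⟩
    · intro c
      have : constantCoeff ((algebraMap ℂ (MvPolynomial (Fin n) ℂ)) c) = c := by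
        simp [algebraMap_eq]
      rw [show ((⟨algebraMap ℂ (MvPolynomial (Fin n) ℂ) c, _⟩ : datumRing n D w)) =
        algebraMap ℂ (datumRing n D w) c from rfl, this, sub_self]
      exact zero_mem _
    · intro x y hx hy ihx ihy
      have : (⟨x + y, add_mem hx hy⟩ : datumRing n D w) -
          algebraMap ℂ _ (constantCoeff (x + y)) =
          ((⟨x, hx⟩ : datumRing n D w) - algebraMap ℂ _ (constantCoeff x)) +
          ((⟨y, hy⟩ : datumRing n D w) - algebraMap ℂ _ (constantCoeff y)) := by
        apply Subtype.ext
        push_cast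
        rw [map_add]
        push_cast
        ring
      rw [this]
      exact add_mem ihx ihy
    · intro x y hx hy ihx ihy
      have : (⟨x * y, mul_mem hx hy⟩ : datumRing n D w) -
          algebraMap ℂ _ (constantCoeff (x * y)) =
          (⟨x, hx⟩ : datumRing n D w) *
            ((⟨y, hy⟩ : datumRing n D w) - algebraMap ℂ _ (constantCoeff y)) +
          algebraMap ℂ (datumRing n D w) (constantCoeff y) *
            ((⟨x, hx⟩ : datumRing n D w) - algebraMap ℂ _ (constantCoeff x)) := by
        apply Subtype.ext
        push_cast
        rw [map_mul]
        push_cast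
        ring
      rw [this]
      exact add_mem (Ideal.mul_mem_left _ _ ihy) (Ideal.mul_mem_left _ _ ihx)
  have := hmain r h2
  simpa using this

/-- Proposition 2.8: for an `n`-dimensional special datum `𝔻 = (D, w)`, the dimension
of `𝔪_𝔻/𝔪_𝔻²` as a `ℂ`-vector space (the embedding dimension of the local ring
`(R_𝔻)_{𝔪_𝔻}`) equals `|D| = n + #{J ∈ D : |J| ≥ 2}`. -/
theorem stmt_16 (n : ℕ) (hn : 1 ≤ n) (D : Finset (Finset (Fin n)))
    (w : Finset (Fin n) → ℕ) (hD : IsSpecialDatum D w) :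
    Module.finrank ℂ (datumIdeal n D w).Cotangent = D.card ∧
      D.card = n + (D.filter (fun J => 2 ≤ J.card)).card := by
  classical
  constructor
  · -- dimension part
    set R := datumRing n D w with hR
    set m := datumIdeal n D w with hm
    have hgen_mem : ∀ J ∈ D, (monomial (vvec w J) 1 : MvPolynomial (Fin n) ℂ) ∈ R :=
      fun J hJ => Algebra.subset_adjoin ⟨J, hJ, (gen_eq_monomial w J (hD.w_pos J hJ)).symm⟩
    have hgen_m : ∀ (J : Finset (Fin n)) (hJ : J ∈ D),
        (⟨monomial (vvec w J) 1, hgen_mem J hJ⟩ : R) ∈ m := fun J hJ =>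
      Ideal.subset_span ⟨J, hJ, (gen_eq_monomial w J (hD.w_pos J hJ)).symm⟩
    set G : {J // J ∈ D} → m := fun J =>
      ⟨⟨monomial (vvec w J.1) 1, hgen_mem J.1 J.2⟩, hgen_m J.1 J.2⟩ with hG
    set b : {J // J ∈ D} → m.Cotangent := fun J => m.toCotangent (G J) with hb
    have hsmul : ∀ (c : ℂ) (x : m), m.toCotangent (c • x) = c • m.toCotangent x := by
      intro c x
      rw [← algebraMap_smul R c x, map_smul, algebraMap_smul]
    -- linear independence
    have hli : LinearIndependent ℂ b := by
      rw [Fintype.linearIndependent_iff]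
      intro g hg
      have h1 : m.toCotangent (∑ J, g J • G J) = 0 := by
        rw [map_sum]
        rw [← hg]
        exact Finset.sum_congr rfl fun J _ => hsmul (g J) (G J)
      rw [Ideal.toCotangent_eq_zero] at h1
      intro K
      have h2 := coeff_sq_vanish (J := K.1) hD K.2 h1
      have h3 : ((((∑ J, g J • G J : m) : R)) : MvPolynomial (Fin n) ℂ)
          = ∑ J : {J // J ∈ D}, monomial (vvec w J.1) (g J) := by
        push_cast
        refine Finset.sum_congr rfl fun J _ => ?_
        push_cast [hG]
        rw [smul_monomial, smul_eq_mul, mul_one]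
      rw [h3] at h2
      rw [coeff_sum] at h2
      have h4 : ∀ J : {J // J ∈ D}, J ≠ K →
          coeff (vvec w K.1) (monomial (vvec w J.1) (g J)) = 0 := by
        intro J hJK
        rw [coeff_monomial, if_neg]
        intro heq
        apply hJK
        have hsupp : J.1 = K.1 := by
          rw [← vvec_support w J.1 (hD.w_pos J.1 J.2), ← vvec_support w K.1 (hD.w_pos K.1 K.2),
            heq]
        exact Subtype.ext hsupp
      rw [Finset.sum_eq_single K (fun J _ hJK => h4 J hJK) (by simp)] at h2
      rw [coeff_monomial, if_pos rfl] at h2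
      exact h2
    -- spanning
    have hspan : ⊤ ≤ Submodule.span ℂ (Set.range b) := by
      rintro x -
      obtain ⟨⟨a, ha⟩, rfl⟩ := m.toCotangent_surjective x
      refine Submodule.span_induction
        (p := fun a ha => m.toCotangent ⟨a, ha⟩ ∈ Submodule.span ℂ (Set.range b)) ?_ ?_ ?_ ?_ ha
      · rintro f ⟨K, hK, hf⟩
        have : (⟨f, Ideal.subset_span ⟨K, hK, hf⟩⟩ : m) = G ⟨K, hK⟩ := by
          apply Subtype.ext
          apply Subtype.ext
          rw [hf, gen_eq_monomial w K (hD.w_pos K hK)]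
        rw [this]
        exact Submodule.subset_span ⟨⟨K, hK⟩, rfl⟩
      · have h0 : m.toCotangent (0 : m) ∈ Submodule.span ℂ (Set.range b) := by
          rw [map_zero]; exact zero_mem _
        exact h0
      · intro x y hx hy ihx ihy
        rw [show (⟨x + y, add_mem hx hy⟩ : m) = ⟨x, hx⟩ + ⟨y, hy⟩ from rfl, map_add]
        exact add_mem ihx ihy
      · intro r x hx ih
        set c := constantCoeff ((r : MvPolynomial (Fin n) ℂ)) with hc
        have hrx : r • x ∈ m := Submodule.smul_mem _ _ hx
        have heq : (⟨r • x, hrx⟩ : m) =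
            ⟨(r - algebraMap ℂ R c) * x, Ideal.mul_mem_left _ _ hx⟩ + c • (⟨x, hx⟩ : m) := by
          apply Subtype.ext
          push_cast
          rw [smul_eq_mul, Algebra.smul_def]
          ring
        rw [heq, map_add, hsmul]
        have h0 : m.toCotangent ⟨(r - algebraMap ℂ R c) * x, Ideal.mul_mem_left _ _ hx⟩ = 0 := by
          rw [Ideal.toCotangent_eq_zero, pow_two]
          exact Submodule.mul_mem_mul (sub_constCoeff_mem hD r) hx
        rw [h0, zero_add]
        exact Submodule.smul_mem _ _ ih
    have hbasis : Module.Basis {J // J ∈ D} ℂ m.Cotangent := Module.Basis.mk hli hspan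
    rw [Module.finrank_eq_card_basis hbasis, Fintype.card_coe]
  · -- cardinality part
    have hfilter : D.filter (fun J => ¬ 2 ≤ J.card) = D.filter (fun J => J.card = 1) := by
      apply Finset.filter_congr
      intro J hJ
      have := Finset.card_pos.mpr (hD.nonempty_mem J hJ)
      constructor <;> intro h <;> omega
    have himg : D.filter (fun J => J.card = 1) =
        Finset.univ.image (fun i : Fin n => ({i} : Finset (Fin n))) := by
      ext J
      simp only [Finset.mem_filter, Finset.mem_image, Finset.mem_univ, true_and,
        Finset.card_eq_one]
      constructor
      · rintro ⟨hJ, a, rfl⟩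
        exact ⟨a, rfl⟩
      · rintro ⟨i, rfl⟩
        exact ⟨hD.singleton_mem i, i, rfl⟩
    have hcard1 : (D.filter (fun J => J.card = 1)).card = n := by
      rw [himg, Finset.card_image_of_injective _ (fun a b hab => by
        simpa using hab), Finset.card_univ, Fintype.card_fin]
    have hsplit : (D.filter fun J => 2 ≤ J.card).card
        + (D.filter fun J => ¬ 2 ≤ J.card).card = D.card :=
      Finset.card_filter_add_card_filter_not (fun J : Finset (Fin n) => 2 ≤ J.card)
    rw [hfilter, hcard1] at hsplit
    omega
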